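/- Let (α_n) be the reflected coefficient sequence of a nullstable multistep method (so that the solutions of the associated homogeneous recurrence are bounded), and let (α^{(-1)}_n) be the inverse convolution sequence defined by ∑_{s=0}^{r} α_{r-s} α^{(-1)}_s = δ_{0r}. Then the sequence (α^{(-1)}_n) is bounded. -/

import Mathlib

open Finset Polynomial PowerSeries

/-- The geometric power series that inverts `X - C u` for `u ≠ 0`. -/
noncomputable def geomS (u : ℂ) : PowerSeries ℂ := PowerSeries.mk fun n => -(u⁻¹ ^ (n + 1))

lemma geomS_mul_eq_one {u : ℂ} (hu : u ≠ 0) :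
    ((Polynomial.X - Polynomial.C u : Polynomial ℂ) : PowerSeries ℂ) * geomS u = 1 := by
  have hco : ((Polynomial.X - Polynomial.C u : Polynomial ℂ) : PowerSeries ℂ)
      = PowerSeries.X - PowerSeries.C u := by
    rw [Polynomial.coe_sub, Polynomial.coe_X, Polynomial.coe_C]
  rw [hco]
  ext n
  rw [sub_mul]
  cases n with
  | zero =>
      simp [geomS, PowerSeries.coeff_zero_X_mul, hu]
  | succ k =>
      simp only [map_sub, PowerSeries.coeff_succ_X_mul, geomS, PowerSeries.coeff_mk,
        PowerSeries.coeff_C_mul, PowerSeries.coeff_one, Nat.succ_ne_zero, if_false]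
      field_simp
      ring_nf
      rw [sq, ← mul_assoc, mul_inv_cancel₀ hu, one_mul, sub_self]

lemma abs_coeff_geomS (u : ℂ) (n : ℕ) :
    ‖PowerSeries.coeff n (geomS u)‖ = ((‖u‖)⁻¹) ^ (n + 1) := by
  simp [geomS, norm_pow, norm_inv, norm_neg]

/-- Boundedness of partial sums of absolute coefficients is stable under products. -/
lemma psum_mul {f g : PowerSeries ℂ} {Mf Mg : ℝ}
    (hf : ∀ n, ∑ k ∈ range (n + 1), ‖PowerSeries.coeff k f‖ ≤ Mf)
    (hg : ∀ n, ∑ k ∈ range (n + 1), ‖PowerSeries.coeff k g‖ ≤ Mg) :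
    ∀ n, ∑ k ∈ range (n + 1), ‖PowerSeries.coeff k (f * g)‖ ≤ Mf * Mg := by
  set F : ℕ → ℝ := fun k => ‖PowerSeries.coeff k f‖
  set G : ℕ → ℝ := fun k => ‖PowerSeries.coeff k g‖
  have hF0 : ∀ k, 0 ≤ F k := fun k => norm_nonneg _
  have hG0 : ∀ k, 0 ≤ G k := fun k => norm_nonneg _
  have hf' : ∀ n, ∑ k ∈ range n, F k ≤ Mf := fun n => by
    cases n with
    | zero => simpa using le_trans (by positivity) (hf 0)
    | succ k => exact hf k
  have hg' : ∀ n, ∑ k ∈ range n, G k ≤ Mg := fun n => by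
    cases n with
    | zero => simpa using le_trans (by positivity) (hg 0)
    | succ k => exact hg k
  have hFs : Summable F := summable_of_sum_range_le hF0 hf'
  have hGs : Summable G := summable_of_sum_range_le hG0 hg'
  have hFt : ∑' k, F k ≤ Mf := Real.tsum_le_of_sum_range_le hF0 hf'
  have hGt : ∑' k, G k ≤ Mg := Real.tsum_le_of_sum_range_le hG0 hg'
  have hprod : Summable fun x : ℕ × ℕ => F x.1 * G x.2 :=
    hFs.mul_of_nonneg hGs hF0 hG0
  have hcauchy : ((∑' n, F n) * ∑' n, G n) = ∑' n, ∑ k ∈ range (n + 1), F k * G (n - k) :=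
    hFs.tsum_mul_tsum_eq_tsum_sum_range hGs hprod
  have hconvsum : Summable fun n => ∑ k ∈ range (n + 1), F k * G (n - k) :=
    summable_sum_mul_range_of_summable_mul hprod
  intro n
  have step1 : ∀ k, ‖PowerSeries.coeff k (f * g)‖
      ≤ ∑ j ∈ range (k + 1), F j * G (k - j) := by
    intro k
    rw [PowerSeries.coeff_mul, Finset.Nat.sum_antidiagonal_eq_sum_range_succ_mk]
    refine le_trans (norm_sum_le _ _) ?_
    refine Finset.sum_le_sum fun j _ => ?_
    simp [F, G, norm_mul]
  calc ∑ k ∈ range (n + 1), ‖PowerSeries.coeff k (f * g)‖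
      ≤ ∑ k ∈ range (n + 1), ∑ j ∈ range (k + 1), F j * G (k - j) :=
        Finset.sum_le_sum fun k _ => step1 k
    _ ≤ ∑' k, ∑ j ∈ range (k + 1), F j * G (k - j) :=
        Summable.sum_le_tsum _ (fun k _ => Finset.sum_nonneg fun j _ => mul_nonneg (hF0 _) (hG0 _))
          hconvsum
    _ = (∑' k, F k) * ∑' k, G k := hcauchy.symm
    _ ≤ Mf * Mg := by
        have h0F : 0 ≤ ∑' k, F k := tsum_nonneg hF0
        have h0G : 0 ≤ ∑' k, G k := tsum_nonneg hG0
        exact mul_le_mul hFt hGt h0G (le_trans h0F hFt)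

lemma psum_geomS {u : ℂ} (hu : 1 < ‖u‖) :
    ∀ n, ∑ k ∈ range (n + 1), ‖PowerSeries.coeff k (geomS u)‖
      ≤ (1 - (‖u‖)⁻¹)⁻¹ := by
  intro n
  set r : ℝ := (‖u‖)⁻¹
  have hr0 : 0 ≤ r := by positivity
  have hr1 : r < 1 := by
    rw [inv_lt_one_iff₀]; right; exact hu
  have hterm : ∀ k, ‖PowerSeries.coeff k (geomS u)‖ ≤ r ^ k := by
    intro k
    rw [abs_coeff_geomS]
    calc r ^ (k + 1) ≤ r ^ k * 1 := by
          rw [pow_succ]; exact mul_le_mul_of_nonneg_left hr1.le (by positivity)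
      _ = r ^ k := mul_one _
  calc ∑ k ∈ range (n + 1), ‖PowerSeries.coeff k (geomS u)‖
      ≤ ∑ k ∈ range (n + 1), r ^ k := Finset.sum_le_sum fun k _ => hterm k
    _ ≤ ∑' k, r ^ k := Summable.sum_le_tsum _ (fun k _ => by positivity)
        (summable_geometric_of_lt_one hr0 hr1)
    _ = (1 - r)⁻¹ := tsum_geometric_of_lt_one hr0 hr1

lemma prod_geom_bound (s : Multiset ℂ) (hs : ∀ w ∈ s, 1 < ‖w‖) :
    ∃ M : ℝ, ∀ n, ∑ k ∈ range (n + 1),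
      ‖PowerSeries.coeff k (s.map geomS).prod‖ ≤ M := by
  induction s using Multiset.induction with
  | empty =>
      refine ⟨1, fun n => ?_⟩
      simp only [Multiset.map_zero, Multiset.prod_zero]
      have h1 : ∀ k, ‖(PowerSeries.coeff k) (1 : PowerSeries ℂ)‖
          = if k = 0 then 1 else 0 := by
        intro k; rw [PowerSeries.coeff_one]; split <;> simp
      rw [Finset.sum_congr rfl fun k _ => h1 k,
        Finset.sum_ite_eq' (range (n + 1)) 0 (fun _ => (1 : ℝ))]
      simp
  | cons w s ih =>
      have hw : 1 < ‖w‖ := hs w (Multiset.mem_cons_self _ _)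
      obtain ⟨M, hM⟩ := ih (fun x hx => hs x (Multiset.mem_cons_of_mem hx))
      refine ⟨(1 - (‖w‖)⁻¹)⁻¹ * M, fun n => ?_⟩
      rw [Multiset.map_cons, Multiset.prod_cons]
      exact psum_mul (psum_geomS hw) hM n

/-- The Lagrange partial-fraction inverse for a product of simple factors on the unit circle. -/
lemma unit_part (t : Finset ℂ) (ht1 : ∀ u ∈ t, ‖u‖ = 1) :
    ∃ (L : PowerSeries ℂ) (ML : ℝ),
      (∀ n, ‖PowerSeries.coeff n L‖ ≤ ML) ∧
      (∏ u ∈ t, ((Polynomial.X - Polynomial.C u : Polynomial ℂ) : PowerSeries ℂ)) * L = 1 := by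
  have ht0 : ∀ u ∈ t, u ≠ 0 := by
    intro u hu h0
    have := ht1 u hu
    rw [h0] at this; simp at this
  rcases t.eq_empty_or_nonempty with rfl | hne
  · refine ⟨1, 1, fun n => ?_, by simp⟩
    rw [PowerSeries.coeff_one]; split <;> simp
  · set d : ℂ → ℂ := fun u => ∏ v ∈ t.erase u, (u - v)⁻¹ with hd
    have hdeg : (1 : Polynomial ℂ).degree < t.card := by
      rw [Polynomial.degree_one]
      exact_mod_cast hne.card_pos
    have hlag := Lagrange.eq_interpolate (v := id) (s := t) Function.injective_id.injOn hdeg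
    rw [Lagrange.interpolate_apply] at hlag
    have hpoly : ∑ u ∈ t, Polynomial.C (d u) *
        (∏ v ∈ t.erase u, (Polynomial.X - Polynomial.C v)) = 1 := by
      rw [hlag]
      refine Finset.sum_congr rfl fun u hu => ?_
      simp only [Polynomial.eval_one, map_one, one_mul, Lagrange.basis, Lagrange.basisDivisor,
        id_eq, hd]
      rw [Finset.prod_mul_distrib, ← map_prod]
    refine ⟨∑ u ∈ t, PowerSeries.C (d u) * geomS u, ∑ u ∈ t, ‖d u‖, ?_, ?_⟩
    · intro n
      rw [map_sum]
      refine le_trans (norm_sum_le _ _) (Finset.sum_le_sum fun u hu => ?_)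
      rw [PowerSeries.coeff_C_mul, norm_mul, abs_coeff_geomS, ht1 u hu]
      simp
    · rw [Finset.mul_sum]
      have key : ∀ u ∈ t,
          (∏ v ∈ t, ((Polynomial.X - Polynomial.C v : Polynomial ℂ) : PowerSeries ℂ))
            * (PowerSeries.C (d u) * geomS u)
          = PowerSeries.C (d u)
            * ∏ v ∈ t.erase u,
                ((Polynomial.X - Polynomial.C v : Polynomial ℂ) : PowerSeries ℂ) := by
        intro u hu
        rw [← Finset.mul_prod_erase _ _ hu]
        calc (((Polynomial.X - Polynomial.C u : Polynomial ℂ) : PowerSeries ℂ)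
              * ∏ v ∈ t.erase u,
                  ((Polynomial.X - Polynomial.C v : Polynomial ℂ) : PowerSeries ℂ))
            * (PowerSeries.C (d u) * geomS u)
            = PowerSeries.C (d u)
              * ((∏ v ∈ t.erase u,
                    ((Polynomial.X - Polynomial.C v : Polynomial ℂ) : PowerSeries ℂ))
                * (((Polynomial.X - Polynomial.C u : Polynomial ℂ) : PowerSeries ℂ)
                    * geomS u)) := by ring
          _ = PowerSeries.C (d u)
              * ∏ v ∈ t.erase u,
                  ((Polynomial.X - Polynomial.C v : Polynomial ℂ) : PowerSeries ℂ) := by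
              rw [geomS_mul_eq_one (ht0 u hu), mul_one]
      rw [Finset.sum_congr rfl key]
      have h2 := congrArg (Polynomial.coeToPowerSeries.ringHom (R := ℂ)) hpoly
      simpa only [map_sum, map_mul, map_prod, map_one, Polynomial.coeToPowerSeries.ringHom_apply,
        Polynomial.coe_C] using h2

/-- For a nullstable multistep method, the convolution inverse of the reflected
coefficient sequence is bounded. -/
theorem convolution_inverse_bounded_of_nullstable
    (m : ℕ) (a : ℕ → ℝ) (ham : a m ≠ 0)
    (hroots : ∀ z : ℂ, (∑ j ∈ Finset.range (m + 1), (a j : ℂ) * z ^ j) = 0 →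
      ‖z‖ ≤ 1)
    (hsimple : ∀ z : ℂ, (∑ j ∈ Finset.range (m + 1), (a j : ℂ) * z ^ j) = 0 →
      ‖z‖ = 1 →
      (∑ j ∈ Finset.range (m + 1), (j : ℂ) * (a j : ℂ) * z ^ (j - 1)) ≠ 0)
    (α αinv : ℕ → ℝ)
    (hα : ∀ j : ℕ, α j = if j ≤ m then a (m - j) else 0)
    (hconv : ∀ r : ℕ, ∑ s ∈ Finset.range (r + 1), α (r - s) * αinv s =
      if r = 0 then 1 else 0) :
    ∃ K : ℝ, ∀ n : ℕ, |αinv n| ≤ K := by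
  classical
  set P : Polynomial ℂ := ∑ j ∈ Finset.range (m + 1), Polynomial.C ((α j : ℂ)) * Polynomial.X ^ j
    with hPdef
  have hPcoeff : ∀ k, P.coeff k = (α k : ℂ) := by
    intro k
    rw [hPdef, Polynomial.finset_sum_coeff]
    simp only [Polynomial.coeff_C_mul, Polynomial.coeff_X_pow]
    rw [Finset.sum_congr rfl (fun j _ => by rw [mul_ite, mul_one, mul_zero]),
      Finset.sum_ite_eq (range (m + 1)) k (fun j => (α j : ℂ))]
    by_cases hk : k ≤ m
    · simp [Finset.mem_range, Nat.lt_succ_iff, hk]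
    · have : α k = 0 := by rw [hα]; simp [hk]
      simp [Finset.mem_range, Nat.lt_succ_iff, hk, this]
  have hα0 : (α 0 : ℂ) ≠ 0 := by
    rw [hα 0]
    simpa using Complex.ofReal_ne_zero.mpr ham
  have hP0 : P ≠ 0 := by
    intro h
    apply hα0
    rw [← hPcoeff 0, h, Polynomial.coeff_zero]
  have hlc : P.leadingCoeff ≠ 0 := Polynomial.leadingCoeff_ne_zero.mpr hP0
  have heval : ∀ u : ℂ, P.eval u = ∑ j ∈ range (m + 1), (α j : ℂ) * u ^ j := by
    intro u
    rw [hPdef, Polynomial.eval_finset_sum]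
    simp
  -- key power identity
  have powh : ∀ (u : ℂ), u ≠ 0 → ∀ j ≤ m, u ^ m * (u⁻¹) ^ j = u ^ (m - j) := by
    intro u hu j hj
    rw [inv_pow, ← pow_sub₀ u hu hj]
  -- roots of P are nonzero
  have hne0 : ∀ u : ℂ, P.IsRoot u → u ≠ 0 := by
    intro u hu h0
    apply hα0
    rw [← hPcoeff 0, Polynomial.coeff_zero_eq_eval_zero]
    rw [h0] at hu
    exact hu
  -- the reciprocal of a root of P is a root of ϱ
  have hTroot : ∀ u : ℂ, P.IsRoot u →
      (∑ j ∈ range (m + 1), (a j : ℂ) * (u⁻¹) ^ j) = 0 := by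
    intro u hu
    have hu0 : u ≠ 0 := hne0 u hu
    have key : u ^ m * (∑ j ∈ range (m + 1), (a j : ℂ) * (u⁻¹) ^ j) = P.eval u := by
      rw [heval u, ← Finset.sum_range_reflect (fun j => (α j : ℂ) * u ^ j) (m + 1),
        Finset.mul_sum]
      refine Finset.sum_congr rfl fun j hj => ?_
      rw [Finset.mem_range, Nat.lt_succ_iff] at hj
      have h1 : m + 1 - 1 - j = m - j := by omega
      have h2 : (α (m - j) : ℂ) = (a j : ℂ) := by
        rw [hα]; simp [Nat.sub_sub_self hj, Nat.sub_le]
      rw [h1, h2, mul_comm ((a j : ℂ)) ((u⁻¹) ^ j), ← mul_assoc, powh u hu0 j hj]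
      ring
    have : u ^ m * (∑ j ∈ range (m + 1), (a j : ℂ) * (u⁻¹) ^ j) = 0 := key.trans hu
    rcases mul_eq_zero.mp this with h | h
    · exact absurd h (pow_ne_zero m hu0)
    · exact h
  -- all roots have modulus ≥ 1
  have habs : ∀ u : ℂ, P.IsRoot u → 1 ≤ ‖u‖ := by
    intro u hu
    have hu0 : u ≠ 0 := hne0 u hu
    have h1 := hroots u⁻¹ (hTroot u hu)
    rw [norm_inv] at h1
    have hpos : 0 < ‖u‖ := norm_pos_iff.mpr hu0
    have := mul_le_mul_of_nonneg_left h1 hpos.le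
    rwa [mul_inv_cancel₀ hpos.ne', mul_one] at this
  -- roots on the unit circle are simple
  have hDne : ∀ u : ℂ, P.IsRoot u → ‖u‖ = 1 → ¬ P.derivative.IsRoot u := by
    intro u hu habs1 hD
    have hu0 : u ≠ 0 := hne0 u hu
    have hv0 : u⁻¹ ≠ 0 := inv_ne_zero hu0
    have habsv : ‖u⁻¹‖ = 1 := by rw [norm_inv, habs1]; norm_num
    have hS2 := hsimple u⁻¹ (hTroot u hu) habsv
    -- derivative evaluation
    have hderiv : P.derivative.eval u = ∑ j ∈ range (m + 1), (α j : ℂ) * j * u ^ (j - 1) := by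
      rw [hPdef]
      rw [map_sum]
      rw [Polynomial.eval_finset_sum]
      refine Finset.sum_congr rfl fun j _ => ?_
      rw [Polynomial.derivative_C_mul_X_pow]
      simp [mul_comm]
    have A1 : u * P.derivative.eval u = ∑ j ∈ range (m + 1), (α j : ℂ) * j * u ^ j := by
      rw [hderiv, Finset.mul_sum]
      refine Finset.sum_congr rfl fun j _ => ?_
      cases j with
      | zero => simp
      | succ k => rw [Nat.add_sub_cancel, pow_succ]; ring
    have A2 : ∑ j ∈ range (m + 1), (α j : ℂ) * j * u ^ j
        = ∑ j ∈ range (m + 1), (a j : ℂ) * ((m : ℂ) - j) * (u ^ m * (u⁻¹) ^ j) := by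
      rw [← Finset.sum_range_reflect (fun j => (α j : ℂ) * j * u ^ j) (m + 1)]
      refine Finset.sum_congr rfl fun j hj => ?_
      rw [Finset.mem_range, Nat.lt_succ_iff] at hj
      have h1 : m + 1 - 1 - j = m - j := by omega
      have h2 : (α (m - j) : ℂ) = (a j : ℂ) := by
        rw [hα]; simp [Nat.sub_sub_self hj, Nat.sub_le]
      have h3 : ((m - j : ℕ) : ℂ) = (m : ℂ) - j := by
        push_cast [Nat.cast_sub hj]; ring
      rw [h1, h2, h3, powh u hu0 j hj]
    have A4 : ∑ j ∈ range (m + 1), (a j : ℂ) * ((m : ℂ) - j) * (u ^ m * (u⁻¹) ^ j)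
        = u ^ m * ((m : ℂ) * (∑ j ∈ range (m + 1), (a j : ℂ) * (u⁻¹) ^ j))
          - u ^ m * (∑ j ∈ range (m + 1), (j : ℂ) * (a j : ℂ) * (u⁻¹) ^ j) := by
      rw [Finset.mul_sum, Finset.mul_sum, Finset.mul_sum, ← Finset.sum_sub_distrib]
      refine Finset.sum_congr rfl fun j _ => by ring
    have hW : ∑ j ∈ range (m + 1), (j : ℂ) * (a j : ℂ) * (u⁻¹) ^ j
        = u⁻¹ * ∑ j ∈ range (m + 1), (j : ℂ) * (a j : ℂ) * (u⁻¹) ^ (j - 1) := by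
      rw [Finset.mul_sum]
      refine Finset.sum_congr rfl fun j _ => ?_
      cases j with
      | zero => simp
      | succ k => rw [Nat.add_sub_cancel, pow_succ]; ring
    have A5 : u * P.derivative.eval u
        = - (u ^ m * (u⁻¹ * ∑ j ∈ range (m + 1), (j : ℂ) * (a j : ℂ) * (u⁻¹) ^ (j - 1))) := by
      rw [A1, A2, A4, hTroot u hu, hW]
      ring
    rw [hD, mul_zero] at A5
    have : u ^ m * (u⁻¹ * ∑ j ∈ range (m + 1), (j : ℂ) * (a j : ℂ) * (u⁻¹) ^ (j - 1)) = 0 := by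
      exact neg_eq_zero.mp A5.symm
    exact (mul_ne_zero (pow_ne_zero m hu0) (mul_ne_zero hv0 hS2)) this
  -- factorization
  have hsplits : P.Splits := IsAlgClosed.splits P
  have hfact := hsplits.eq_prod_roots
  set R : Multiset ℂ := P.roots with hR
  set s1 : Multiset ℂ := R.filter (fun z => ‖z‖ = 1) with hs1
  set s2 : Multiset ℂ := R.filter (fun z => ¬ ‖z‖ = 1) with hs2
  have hpart : s1 + s2 = R := Multiset.filter_add_not _ _
  have hs2abs : ∀ w ∈ s2, 1 < ‖w‖ := by
    intro w hw
    rw [hs2, Multiset.mem_filter] at hw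
    have h1 := habs w (Polynomial.isRoot_of_mem_roots hw.1)
    exact lt_of_le_of_ne h1 (Ne.symm hw.2)
  have hs1nodup : s1.Nodup := by
    rw [Multiset.nodup_iff_count_le_one]
    intro z
    by_cases hz1 : ‖z‖ = 1
    · calc s1.count z ≤ R.count z := Multiset.count_le_of_le z (Multiset.filter_le _ _)
        _ = P.rootMultiplicity z := P.count_roots
        _ ≤ 1 := by
          by_contra h
          push_neg at h
          have h2 := (Polynomial.one_lt_rootMultiplicity_iff_isRoot hP0).mp h
          exact hDne z h2.1 hz1 h2.2
    · have hmem : z ∉ s1 := by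
        intro hmem
        exact hz1 ((Multiset.mem_filter.mp hmem).2)
      simp [Multiset.count_eq_zero_of_notMem hmem]
  set t : Finset ℂ := s1.toFinset with ht
  have htval : t.val = s1 := by
    rw [ht, Multiset.toFinset_val, Multiset.dedup_eq_self.mpr hs1nodup]
  have ht1 : ∀ u ∈ t, ‖u‖ = 1 := by
    intro u hu
    rw [ht, Multiset.mem_toFinset, hs1, Multiset.mem_filter] at hu
    exact hu.2
  obtain ⟨L, ML, hL, hLinv⟩ := unit_part t ht1
  obtain ⟨MG, hMG⟩ := prod_geom_bound s2 hs2abs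
  set G : PowerSeries ℂ := (s2.map geomS).prod with hG
  -- inverse of the outer factor
  have hGinv : ((s2.map fun w => ((Polynomial.X - Polynomial.C w : Polynomial ℂ)
      : PowerSeries ℂ)).prod) * G = 1 := by
    rw [hG, ← Multiset.prod_map_mul]
    have : s2.map (fun w => ((Polynomial.X - Polynomial.C w : Polynomial ℂ) : PowerSeries ℂ)
        * geomS w) = s2.map (fun _ => (1 : PowerSeries ℂ)) := by
      refine Multiset.map_congr rfl fun w hw => ?_
      have hw0 : w ≠ 0 := by
        intro h0
        have := hs2abs w hw
        rw [h0] at this; norm_num at this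
      exact geomS_mul_eq_one hw0
    rw [this]
    simp
  -- cast of the factorization to power series
  have hcast : (P : PowerSeries ℂ) = PowerSeries.C P.leadingCoeff
      * ((∏ u ∈ t, ((Polynomial.X - Polynomial.C u : Polynomial ℂ) : PowerSeries ℂ))
        * (s2.map fun w => ((Polynomial.X - Polynomial.C w : Polynomial ℂ)
            : PowerSeries ℂ)).prod) := by
    conv_lhs => rw [hfact]
    rw [show (R.map fun a => Polynomial.X - Polynomial.C a) =
        (s1.map fun a => Polynomial.X - Polynomial.C a)
          + (s2.map fun a => Polynomial.X - Polynomial.C a) by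
      rw [← Multiset.map_add, hpart]]
    rw [Multiset.prod_add]
    rw [Polynomial.coe_mul, Polynomial.coe_C, Polynomial.coe_mul]
    congr 1
    congr 1
    · rw [Finset.prod_eq_multiset_prod, htval]
      rw [← Polynomial.coeToPowerSeries.ringHom_apply, map_multiset_prod, Multiset.map_map]
      rfl
    · rw [← Polynomial.coeToPowerSeries.ringHom_apply, map_multiset_prod, Multiset.map_map]
      rfl
  set B : PowerSeries ℂ := PowerSeries.C (P.leadingCoeff)⁻¹ * (L * G) with hB
  have hPB : (P : PowerSeries ℂ) * B = 1 := by
    rw [hcast, hB]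
    have : PowerSeries.C P.leadingCoeff
        * ((∏ u ∈ t, ((Polynomial.X - Polynomial.C u : Polynomial ℂ) : PowerSeries ℂ))
          * (s2.map fun w => ((Polynomial.X - Polynomial.C w : Polynomial ℂ)
              : PowerSeries ℂ)).prod)
        * (PowerSeries.C (P.leadingCoeff)⁻¹ * (L * G))
        = (PowerSeries.C P.leadingCoeff * PowerSeries.C (P.leadingCoeff)⁻¹)
          * (((∏ u ∈ t, ((Polynomial.X - Polynomial.C u : Polynomial ℂ) : PowerSeries ℂ)) * L)
            * ((s2.map fun w => ((Polynomial.X - Polynomial.C w : Polynomial ℂ)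
                : PowerSeries ℂ)).prod * G)) := by ring
    rw [this, hLinv, hGinv, ← map_mul, mul_inv_cancel₀ hlc]
    simp
  -- A is the inverse of P
  set A : PowerSeries ℂ := PowerSeries.mk fun n => ((αinv n : ℝ) : ℂ) with hA
  have hPA : (P : PowerSeries ℂ) * A = 1 := by
    ext n
    rw [PowerSeries.coeff_mul, Finset.Nat.sum_antidiagonal_eq_sum_range_succ_mk]
    have e1 : ∀ i ∈ range (n + 1),
        (PowerSeries.coeff i (P : PowerSeries ℂ)) * PowerSeries.coeff (n - i) A
        = (α i : ℂ) * (αinv (n - i) : ℂ) := by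
      intro i _
      rw [Polynomial.coeff_coe, hPcoeff, hA, PowerSeries.coeff_mk]
    rw [Finset.sum_congr rfl e1]
    have e2 := Finset.sum_range_reflect (fun i => (α i : ℂ) * (αinv (n - i) : ℂ)) (n + 1)
    have e3 : ∀ j ∈ range (n + 1),
        (α (n + 1 - 1 - j) : ℂ) * (αinv (n - (n + 1 - 1 - j)) : ℂ)
        = (α (n - j) : ℂ) * (αinv j : ℂ) := by
      intro j hj
      rw [Finset.mem_range, Nat.lt_succ_iff] at hj
      have h1 : n + 1 - 1 - j = n - j := by omega
      have h2 : n - (n - j) = j := by omega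
      rw [h1, h2]
    rw [← e2, Finset.sum_congr rfl e3]
    have hc : (∑ j ∈ range (n + 1), (α (n - j) : ℂ) * (αinv j : ℂ))
        = (((if n = 0 then (1 : ℝ) else 0) : ℝ) : ℂ) := by
      rw [← hconv n]
      push_cast
      rfl
    rw [hc, PowerSeries.coeff_one]
    split <;> simp
  -- uniqueness of the inverse
  have hAB : A = B := by
    calc A = A * ((P : PowerSeries ℂ) * B) := by rw [hPB, mul_one]
      _ = ((P : PowerSeries ℂ) * A) * B := by ring
      _ = B := by rw [hPA, one_mul]
  -- nonnegativity facts
  have hML0 : 0 ≤ ML := le_trans (norm_nonneg _) (hL 0)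
  -- final bound
  have hBound : ∀ n, ‖PowerSeries.coeff n B‖
      ≤ ‖(P.leadingCoeff)⁻¹‖ * (ML * MG) := by
    intro n
    rw [hB, PowerSeries.coeff_C_mul, norm_mul]
    refine mul_le_mul_of_nonneg_left ?_ (norm_nonneg _)
    rw [PowerSeries.coeff_mul, Finset.Nat.sum_antidiagonal_eq_sum_range_succ_mk]
    refine le_trans (norm_sum_le _ _) ?_
    calc ∑ j ∈ range (n + 1), ‖PowerSeries.coeff j L
            * PowerSeries.coeff (n - j) G‖
        ≤ ∑ j ∈ range (n + 1), ML * ‖PowerSeries.coeff (n - j) G‖ := by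
          refine Finset.sum_le_sum fun j _ => ?_
          rw [norm_mul]
          exact mul_le_mul_of_nonneg_right (hL j) (norm_nonneg _)
      _ = ML * ∑ j ∈ range (n + 1), ‖PowerSeries.coeff (n - j) G‖ := by
          rw [Finset.mul_sum]
      _ = ML * ∑ j ∈ range (n + 1), ‖PowerSeries.coeff j G‖ := by
          congr 1
          rw [← Finset.sum_range_reflect (fun j => ‖PowerSeries.coeff j G‖) (n + 1)]
          refine Finset.sum_congr rfl fun j hj => ?_
          rw [Finset.mem_range, Nat.lt_succ_iff] at hj
          have h1 : n + 1 - 1 - j = n - j := by omega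
          rw [h1]
      _ ≤ ML * MG := mul_le_mul_of_nonneg_left (hMG n) hML0
  refine ⟨‖(P.leadingCoeff)⁻¹‖ * (ML * MG), fun n => ?_⟩
  calc |αinv n| = ‖((αinv n : ℝ) : ℂ)‖ := by rw [Complex.norm_real, Real.norm_eq_abs]
    _ = ‖PowerSeries.coeff n A‖ := by rw [hA, PowerSeries.coeff_mk]
    _ = ‖PowerSeries.coeff n B‖ := by rw [hAB]
    _ ≤ _ := hBound n
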